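/- Under CDF-based scheduling, for a user with channel access ratio α ∈ (0,1], the average CDF value given selection is D(α) = ∫₀¹ u d(u^{1/α}) = 1/(1+α), the optimal average CDF value is D_UB(α) = (2-α)/2, and the qualitative fairness index I_D(α) = D(α)/D_UB(α) = 2/((1+α)(2-α)) satisfies 8/9 ≤ I_D(α) ≤ 1 for all α ∈ [0, 1]. -/

import Mathlib

open MeasureTheory intervalIntegral

/-- Qualitative fairness of CDF-based scheduling: for a user with channel access ratio
`α ∈ (0,1]`, the average CDF value given selection is
`D(α) = ∫₀¹ u d(u^{1/α}) = 1/(1+α)`, the optimal average CDF value is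
`D_UB(α) = (1/α)∫_{1-α}^1 u du = (2-α)/2`, and the qualitative fairness index
`I_D(α) = D(α)/D_UB(α) = 2/((1+α)(2-α))` satisfies `8/9 ≤ I_D(α) ≤ 1` on `[0,1]`. -/
theorem qualitative_fairness_index_of_cdf_scheduling :
    (∀ α ∈ Set.Ioc (0 : ℝ) 1,
      (∫ u in (0 : ℝ)..1, u * ((1 / α) * u ^ (1 / α - 1))) = 1 / (1 + α) ∧
      (1 / α) * (∫ u in (1 - α)..(1 : ℝ), u) = (2 - α) / 2 ∧
      (1 / (1 + α)) / ((2 - α) / 2) = 2 / ((1 + α) * (2 - α))) ∧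
    (∀ α ∈ Set.Icc (0 : ℝ) 1,
      8 / 9 ≤ 2 / ((1 + α) * (2 - α)) ∧ 2 / ((1 + α) * (2 - α)) ≤ 1) := by
  constructor
  · intro α hα
    obtain ⟨hα0, hα1⟩ := hα
    have hinv : (1 : ℝ) ≤ 1 / α := by
      rw [le_div_iff₀ hα0]; linarith
    have hinvpos : (0 : ℝ) < 1 / α := by linarith
    have h1 : (∫ u in (0 : ℝ)..1, u * ((1 / α) * u ^ (1 / α - 1)))
        = ∫ u in (0 : ℝ)..1, (1 / α) * u ^ (1 / α) := by
      apply intervalIntegral.integral_congr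
      intro u hu
      rw [Set.uIcc_of_le (by norm_num : (0:ℝ) ≤ 1)] at hu
      rcases eq_or_lt_of_le hu.1 with h | h
      · simp only [← h]
        rw [Real.zero_rpow (ne_of_gt hinvpos)]
        ring
      · show u * (1 / α * u ^ (1 / α - 1)) = 1 / α * u ^ (1 / α)
        have : u ^ (1 / α) = u * u ^ (1 / α - 1) := by
          rw [← Real.rpow_one_add' (le_of_lt h) (by intro hc; linarith)]
          ring_nf
        rw [this]; ring
    rw [h1, intervalIntegral.integral_const_mul,
      integral_rpow (Or.inl (by linarith : (-1:ℝ) < 1 / α))]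
    have hne : 1 / α + 1 ≠ 0 := by positivity
    have hαne : α ≠ 0 := ne_of_gt hα0
    have h1α : 1 + α ≠ 0 := by positivity
    refine ⟨?_, ?_, ?_⟩
    · rw [Real.one_rpow, Real.zero_rpow hne]
      field_simp
      norm_num
    · rw [integral_id]
      field_simp
      ring
    · have h2α : 2 - α ≠ 0 := by intro h; linarith
      field_simp
  · intro α hα
    obtain ⟨h0, h1⟩ := hα
    have hp : (0:ℝ) < (1 + α) * (2 - α) := by nlinarith
    constructor
    · rw [div_le_div_iff₀ (by norm_num) hp]
      nlinarith [sq_nonneg (α - 1/2)]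
    · rw [div_le_one hp]
      nlinarith
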